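/- Let G = (√5+1)/2 and let T_o : [-1/2,1/2] → [-1/2,1/2] be defined by T_o(0) = 0 and T_o(x) = 1/x - ⌊1/x + 1/2⌋ for x ≠ 0. Then the probability measure dμ_o = (1/(2 log G))(1/(G+|x|) + 1/(G+1-|x|)) dx on [-1/2,1/2] is T_o-invariant. -/

import Mathlib

open MeasureTheory Set

noncomputable def oddNICF (x : ℝ) : ℝ :=
  if x = 0 then 0 else 1 / x - ⌊1 / x + 1 / 2⌋

noncomputable def oddNICFMeasure : Measure ℝ :=
  (volume.restrict (Set.Icc (-(1 / 2) : ℝ) (1 / 2))).withDensity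
    (fun x => ENNReal.ofReal
      ((1 / ((Real.sqrt 5 + 1) / 2 + |x|) + 1 / ((Real.sqrt 5 + 1) / 2 + 1 - |x|)) /
        (2 * Real.log ((Real.sqrt 5 + 1) / 2))))

namespace OddNICFAux

noncomputable def G : ℝ := (Real.sqrt 5 + 1) / 2

lemma sqrt5_sq : Real.sqrt 5 ^ 2 = 5 := Real.sq_sqrt (by norm_num)

lemma G_sq : G ^ 2 = G + 1 := by
  have h := sqrt5_sq
  unfold G; nlinarith [h]

lemma G_gt : (1.6 : ℝ) < G := by
  unfold G
  nlinarith [sqrt5_sq, Real.sqrt_nonneg 5]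

lemma G_lt : G < 1.7 := by
  unfold G
  nlinarith [sqrt5_sq, Real.sqrt_nonneg 5]

lemma log_G_pos : 0 < Real.log G := Real.log_pos (by linarith [G_gt])

noncomputable def L : ℝ := 2 * Real.log G

lemma L_pos : 0 < L := by unfold L; linarith [log_G_pos]

noncomputable def h (x : ℝ) : ℝ := (1 / (G + |x|) + 1 / (G + 1 - |x|)) / L

noncomputable def d (x : ℝ) : ENNReal := ENNReal.ofReal (h x)

def Ic : Set ℝ := Set.Icc (-(1 / 2) : ℝ) (1 / 2)

lemma measure_def : oddNICFMeasure = (volume.restrict Ic).withDensity d := rfl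

lemma h_nonneg {x : ℝ} (hx : |x| ≤ 1) : 0 ≤ h x := by
  have h1 : 0 < G + |x| := by have := abs_nonneg x; linarith [G_gt]
  have h2 : 0 < G + 1 - |x| := by linarith [G_gt]
  have := L_pos
  unfold h
  positivity

lemma h_meas : Measurable h := by
  unfold h
  fun_prop

lemma d_meas : Measurable d := h_meas.ennreal_ofReal

lemma mu_apply {S : Set ℝ} (hS : MeasurableSet S) :
    oddNICFMeasure S = ∫⁻ x in S ∩ Ic, d x := by
  rw [measure_def, withDensity_apply _ hS, Measure.restrict_restrict hS]

lemma h_contOn : ContinuousOn h Ic := by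
  have h1 : ∀ x ∈ Ic, G + |x| ≠ 0 := by
    intro x hx; have := abs_nonneg x; have := G_gt; positivity
  have h2 : ∀ x ∈ Ic, G + 1 - |x| ≠ 0 := by
    intro x hx
    rcases hx with ⟨hl, hr⟩
    have : |x| ≤ 1/2 := abs_le.mpr ⟨hl, hr⟩
    have := G_gt; nlinarith
  apply ContinuousOn.div_const
  apply ContinuousOn.add
  · exact ContinuousOn.div continuousOn_const
      (continuousOn_const.add continuous_abs.continuousOn) h1
  · exact ContinuousOn.div continuousOn_const
      ((continuousOn_const.add continuousOn_const).sub continuous_abs.continuousOn) h2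

lemma integral_h_pos : ∫ x in (0:ℝ)..(1/2), h x = Real.log G / L := by
  have key : ∀ x ∈ uIcc (0:ℝ) (1/2), HasDerivAt
      (fun y => (Real.log (G + y) - Real.log (G + 1 - y)) / L)
      ((1/(G + x) + 1/(G + 1 - x)) / L) x := by
    intro x hx
    rw [uIcc_of_le (by norm_num)] at hx
    rcases hx with ⟨h0, h1⟩
    have hGx : G + x ≠ 0 := by have := G_gt; positivity
    have hGx' : (0:ℝ) < G + 1 - x := by have := G_gt; linarith
    have d1 : HasDerivAt (fun y => Real.log (G + y)) (1/(G+x)) x := by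
      have := ((hasDerivAt_id x).const_add G).log hGx
      simpa [one_div] using this
    have d2 : HasDerivAt (fun y => Real.log (G + 1 - y)) (-(1/(G+1-x))) x := by
      have base : HasDerivAt (fun y : ℝ => G + 1 - y) (-1) x := by
        simpa using ((hasDerivAt_id x).const_sub (G+1)).neg.neg.congr_deriv (by ring)
      have := base.log (ne_of_gt hGx')
      simpa [one_div, neg_div, div_eq_mul_inv] using this
    simpa [sub_neg_eq_add] using (d1.sub d2).div_const L
  have := intervalIntegral.integral_eq_sub_of_hasDerivAt key ?cont
  case cont =>
    apply ContinuousOn.intervalIntegrable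
    rw [uIcc_of_le (by norm_num)]
    apply ContinuousOn.div_const
    apply ContinuousOn.add
    · apply ContinuousOn.div continuousOn_const (continuousOn_const.add continuousOn_id)
      intro x hx; have := G_gt; rcases hx with ⟨h0, _⟩; show G + x ≠ 0; intro hc; linarith
    · apply ContinuousOn.div continuousOn_const
        ((continuousOn_const.add continuousOn_const).sub continuousOn_id)
      intro x hx; rcases hx with ⟨h0, h1⟩; have := G_gt
      show G + 1 - x ≠ 0; intro hc; nlinarith
  rw [intervalIntegral.integral_congr (g := h) ?eq] at this
  case eq =>
    intro x hx
    rw [uIcc_of_le (by norm_num)] at hx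
    unfold h
    rw [abs_of_nonneg hx.1]
  rw [this]
  have e1 : G + 1 - 1/2 = G + 1/2 := by ring
  have e2 : G + (0:ℝ) = G := by ring
  have e3 : G + 1 - (0:ℝ) = G + 1 := by ring
  have e4 : Real.log (G + 1) = 2 * Real.log G := by
    rw [show G + 1 = G ^ 2 from G_sq.symm, Real.log_pow]; push_cast; ring
  rw [e1, e2, e3, e4]
  ring

lemma integral_h_neg : ∫ x in (-(1/2):ℝ)..0, h x = Real.log G / L := by
  have key : ∀ x ∈ uIcc (-(1/2):ℝ) 0, HasDerivAt
      (fun y => (Real.log (G + 1 + y) - Real.log (G - y)) / L)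
      ((1/(G - x) + 1/(G + 1 + x)) / L) x := by
    intro x hx
    rw [uIcc_of_le (by norm_num)] at hx
    rcases hx with ⟨h0, h1⟩
    have hGx : G + 1 + x ≠ 0 := by have := G_gt; intro hc; nlinarith
    have hGx' : (0:ℝ) < G - x := by have := G_gt; linarith
    have d1 : HasDerivAt (fun y => Real.log (G + 1 + y)) (1/(G+1+x)) x := by
      have := ((hasDerivAt_id x).const_add (G+1)).log hGx
      simpa [one_div] using this
    have d2 : HasDerivAt (fun y => Real.log (G - y)) (-(1/(G-x))) x := by
      have base : HasDerivAt (fun y : ℝ => G - y) (-1) x := by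
        simpa using ((hasDerivAt_id x).const_sub G).neg.neg.congr_deriv (by ring)
      have := base.log (ne_of_gt hGx')
      simpa [one_div, neg_div, div_eq_mul_inv] using this
    have := (d1.sub d2).div_const L
    simpa [sub_neg_eq_add, add_comm] using this
  have := intervalIntegral.integral_eq_sub_of_hasDerivAt key ?cont
  case cont =>
    apply ContinuousOn.intervalIntegrable
    rw [uIcc_of_le (by norm_num)]
    apply ContinuousOn.div_const
    apply ContinuousOn.add
    · apply ContinuousOn.div continuousOn_const (continuousOn_const.sub continuousOn_id)
      intro x hx; rcases hx with ⟨h0, h1⟩; have := G_gt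
      show G - x ≠ 0; intro hc; nlinarith
    · apply ContinuousOn.div continuousOn_const
        ((continuousOn_const.add continuousOn_const).add continuousOn_id)
      intro x hx; rcases hx with ⟨h0, h1⟩; have := G_gt
      show G + 1 + x ≠ 0; intro hc; nlinarith
  rw [intervalIntegral.integral_congr (g := h) ?eq] at this
  case eq =>
    intro x hx
    rw [uIcc_of_le (by norm_num)] at hx
    unfold h
    rw [abs_of_nonpos hx.2]
    ring_nf
  rw [this]
  have e4 : Real.log (G + 1) = 2 * Real.log G := by
    rw [show G + 1 = G ^ 2 from G_sq.symm, Real.log_pow]; push_cast; ring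
  have e1 : G + 1 + 0 = G + 1 := by ring
  have e2 : G - (0:ℝ) = G := by ring
  have e3 : G + 1 + (-(1/2)) = G + 1/2 := by ring
  have e5 : G - (-(1/2)) = G + 1/2 := by ring
  rw [e1, e2, e3, e5, e4]
  ring

lemma integrable_h : IntegrableOn h Ic := h_contOn.integrableOn_compact isCompact_Icc

lemma lintegral_d_Ic : ∫⁻ x in Ic, d x = 1 := by
  have h1 : ∫⁻ x in Ic, d x = ENNReal.ofReal (∫ x in Ic, h x) := by
    rw [ofReal_integral_eq_lintegral_ofReal integrable_h]
    · rfl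
    · refine (ae_restrict_iff' measurableSet_Icc).mpr (Filter.Eventually.of_forall ?_)
      intro x hx
      exact h_nonneg (by rw [abs_le]; constructor <;> [linarith [hx.1]; linarith [hx.2]])
  have h2 : ∫ x in Ic, h x = ∫ x in (-(1/2):ℝ)..(1/2), h x := by
    rw [intervalIntegral.integral_of_le (by norm_num)]
    exact MeasureTheory.integral_Icc_eq_integral_Ioc
  have h3 : ∫ x in (-(1/2):ℝ)..(1/2), h x
      = (∫ x in (-(1/2):ℝ)..0, h x) + ∫ x in (0:ℝ)..(1/2), h x := by
    refine (intervalIntegral.integral_add_adjacent_intervals ?_ ?_).symm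
    · apply ContinuousOn.intervalIntegrable
      apply h_contOn.mono
      rw [uIcc_of_le (by norm_num)]
      intro x hx; exact ⟨hx.1, by linarith [hx.2]⟩
    · apply ContinuousOn.intervalIntegrable
      apply h_contOn.mono
      rw [uIcc_of_le (by norm_num)]
      intro x hx; exact ⟨by linarith [hx.1], hx.2⟩
  rw [h1, h2, h3, integral_h_neg, integral_h_pos]
  have : Real.log G / L + Real.log G / L = 1 := by
    have := log_G_pos
    field_simp [L]
    unfold L; ring
  rw [this, ENNReal.ofReal_one]

lemma part1 : IsProbabilityMeasure oddNICFMeasure := by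
  constructor
  rw [mu_apply MeasurableSet.univ, Set.univ_inter, lintegral_d_Ic]

-- Part 2 machinery

lemma T_zero : oddNICF 0 = 0 := by simp [oddNICF]

lemma T_eq {x : ℝ} (hx : x ≠ 0) : oddNICF x = 1 / x - ⌊1 / x + 1 / 2⌋ := by
  simp [oddNICF, hx]

lemma T_meas : Measurable oddNICF := by
  unfold oddNICF
  refine Measurable.ite (measurableSet_singleton 0) measurable_const ?_
  apply Measurable.sub
  · exact measurable_const.div measurable_id
  · exact Measurable.comp measurable_from_top
      (Int.measurable_floor.comp ((measurable_const.div measurable_id).add measurable_const))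

lemma tele {b : ℝ} (hb : 0 < b) :
    HasSum (fun k : ℕ => 1 / ((k : ℝ) + b) - 1 / ((k : ℝ) + b + 1)) (1 / b) := by
  have nonneg : ∀ k : ℕ, 0 ≤ 1 / ((k : ℝ) + b) - 1 / ((k : ℝ) + b + 1) := by
    intro k
    have h1 : (0:ℝ) < (k : ℝ) + b := by positivity
    have h2 : (0:ℝ) < (k : ℝ) + b + 1 := by positivity
    rw [sub_nonneg, div_le_div_iff₀ h2 h1]
    nlinarith
  rw [hasSum_iff_tendsto_nat_of_nonneg nonneg]
  have hps : ∀ n : ℕ, ∑ i ∈ Finset.range n, (1/((i:ℝ)+b) - 1/((i:ℝ)+b+1))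
      = 1/b - 1/((n:ℝ)+b) := by
    intro n
    induction n with
    | zero => simp
    | succ n ih =>
      rw [Finset.sum_range_succ, ih]
      have h1 : (0:ℝ) < (n : ℝ) + b := by positivity
      have h2 : (0:ℝ) < (n : ℝ) + b + 1 := by positivity
      push_cast
      rw [show ((n:ℝ) + 1 + b) = (n:ℝ) + b + 1 by ring]
      ring
  simp_rw [hps]
  have h0 : Filter.Tendsto (fun n : ℕ => 1/((n:ℝ)+b)) Filter.atTop (nhds 0) := by
    have := (Filter.tendsto_atTop_add_const_right _ b
      (tendsto_natCast_atTop_atTop (R := ℝ))).inv_tendsto_atTop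
    simp only [one_div]; exact this
  simpa using Filter.Tendsto.const_sub (1/b) h0

lemma lintegral_image_1d {s : Set ℝ} {f f' : ℝ → ℝ} (hs : MeasurableSet s)
    (hf' : ∀ x ∈ s, HasDerivWithinAt f (f' x) s x) (hf : Set.InjOn f s) (g : ℝ → ENNReal) :
    ∫⁻ x in f '' s, g x = ∫⁻ x in s, ENNReal.ofReal |f' x| * g (f x) := by
  simpa only [ContinuousLinearMap.det_toSpanSingleton] using
    lintegral_image_eq_lintegral_abs_det_fderiv_mul volume hs
      (fun x hx => (hf' x hx).hasFDerivWithinAt) hf g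

lemma branch_algebra {w : ℝ} (hw : 3/2 ≤ w) :
    (1/(G + 1/w) + 1/(G + 1 - 1/w)) / w^2 = 1/(w + G - 2) - 1/(w + G - 1) := by
  have hG := G_gt; have hG' := G_lt; have hsq := G_sq
  have h0 : (0:ℝ) < w := by linarith
  have h1 : 0 < G + 1/w := by positivity
  have h2 : 0 < G + 1 - 1/w := by
    have : 1/w ≤ 2/3 := by rw [div_le_div_iff₀ h0 (by norm_num)]; linarith
    nlinarith
  have h3 : 0 < w + G - 2 := by nlinarith
  have h4 : 0 < w + G - 1 := by nlinarith
  have h5 : (0:ℝ) < G*w+1 := by nlinarith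
  have h6 : (0:ℝ) < (G+1)*w-1 := by nlinarith
  have key1 : 1/(w*(G*w+1)) = 1/w - 1/(w+G-1) := by
    field_simp
    ring_nf
    linear_combination (-w) * hsq
  have key2 : 1/(w*((G+1)*w-1)) = 1/(w+G-2) - 1/w := by
    rw [div_sub_div _ _ (ne_of_gt h3) (ne_of_gt h0), div_eq_div_iff (mul_pos h0 h6).ne' (mul_pos h3 h0).ne']
    linear_combination (w^2) * hsq
  have expand : (1/(G + 1/w) + 1/(G + 1 - 1/w)) / w^2
      = 1/(w*(G*w+1)) + 1/(w*((G+1)*w-1)) := by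
    rw [div_add_div _ _ (ne_of_gt h1) (ne_of_gt h2)]
    field_simp
  rw [expand, key1, key2]
  ring

lemma density_branch {u : ℝ} (hu : 3/2 ≤ |u|) :
    h (1/u) / u^2 = (1/(|u| + G - 2) - 1/(|u| + G - 1)) / L := by
  have h1 : |1/u| = 1/|u| := by rw [abs_div, abs_one]
  unfold h
  rw [h1, ← sq_abs u, div_right_comm, branch_algebra hu]

def Bp (k : ℕ) : Set ℝ := Ioc (2/(2*(k:ℝ)+5)) (2/(2*(k:ℝ)+3)) ∩ Iic (1/2)
def Bn (k : ℕ) : Set ℝ := Ioc (-(2/(2*(k:ℝ)+3))) (-(2/(2*(k:ℝ)+5))) ∩ Ici (-(1/2))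

lemma one_div_le_one_div_neg {a b : ℝ} (ha : a < 0) (hb : b < 0) (h : a ≤ b) : 1/b ≤ 1/a := by
  have hab : 0 < a*b := mul_pos_of_neg_of_neg ha hb
  have e : 1/a - 1/b = (b-a)/(a*b) := by
    rw [div_sub_div _ _ (ne_of_lt ha) (ne_of_lt hb)]; ring_nf
  nlinarith [div_nonneg (sub_nonneg.mpr h) (le_of_lt hab)]

lemma one_div_lt_one_div_neg {a b : ℝ} (ha : a < 0) (hb : b < 0) (h : a < b) : 1/b < 1/a := by
  have hab : 0 < a*b := mul_pos_of_neg_of_neg ha hb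
  have e : 1/a - 1/b = (b-a)/(a*b) := by
    rw [div_sub_div _ _ (ne_of_lt ha) (ne_of_lt hb)]; ring_nf
  nlinarith [div_pos (sub_pos.mpr h) hab]

lemma floor_Bp {k : ℕ} {x : ℝ} (hx : x ∈ Bp k) : 0 < x ∧ ⌊1/x + 1/2⌋ = (k:ℤ) + 2 := by
  obtain ⟨⟨hl, hr⟩, _⟩ := hx
  have hd5 : (0:ℝ) < 2*(k:ℝ)+5 := by positivity
  have hd3 : (0:ℝ) < 2*(k:ℝ)+3 := by positivity
  have hx0 : 0 < x := lt_trans (by positivity) hl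
  have hl' : 2 < x*(2*(k:ℝ)+5) := (div_lt_iff₀ hd5).mp hl
  have hr' : x*(2*(k:ℝ)+3) ≤ 2 := (le_div_iff₀ hd3).mp hr
  have key1 : 1/x < ((k:ℝ)+2) + 1/2 := by
    rw [div_lt_iff₀ hx0]; nlinarith
  have key2 : ((k:ℝ)+2) - 1/2 ≤ 1/x := by
    rw [le_div_iff₀ hx0]; nlinarith
  refine ⟨hx0, ?_⟩
  rw [Int.floor_eq_iff]
  constructor
  · push_cast; linarith
  · push_cast; linarith

lemma floor_Bn {k : ℕ} {x : ℝ} (hx : x ∈ Bn k) : x < 0 ∧ ⌊1/x + 1/2⌋ = -((k:ℤ) + 2) := by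
  obtain ⟨⟨hl, hr⟩, _⟩ := hx
  have hd5 : (0:ℝ) < 2*(k:ℝ)+5 := by positivity
  have hd3 : (0:ℝ) < 2*(k:ℝ)+3 := by positivity
  have hb5 : (-(2/(2*(k:ℝ)+5))) < 0 := by
    rw [neg_lt_zero]; positivity
  have hb3 : (-(2/(2*(k:ℝ)+3))) < 0 := by
    rw [neg_lt_zero]; positivity
  have hx0 : x < 0 := lt_of_le_of_lt hr hb5
  have key2 : -((k:ℝ)+2) - 1/2 ≤ 1/x := by
    have h1 := one_div_le_one_div_neg hx0 hb5 hr
    have e : (1:ℝ)/(-(2/(2*(k:ℝ)+5))) = -((k:ℝ)+2) - 1/2 := by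
      rw [div_neg, one_div_div]; ring
    linarith [e ▸ h1]
  have key1 : 1/x < -((k:ℝ)+2) + 1/2 := by
    have h1 := one_div_lt_one_div_neg hb3 hx0 hl
    have e : (1:ℝ)/(-(2/(2*(k:ℝ)+3))) = -((k:ℝ)+2) + 1/2 := by
      rw [div_neg, one_div_div]; ring
    linarith [e ▸ h1]
  refine ⟨hx0, ?_⟩
  rw [Int.floor_eq_iff]
  constructor
  · push_cast; linarith
  · push_cast; linarith

lemma cover {x : ℝ} (hx : x ∈ Ic) (hx0 : x ≠ 0) :
    (∃ k, x ∈ Bp k) ∨ (∃ k, x ∈ Bn k) := by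
  obtain ⟨hl, hr⟩ := hx
  set n : ℤ := ⌊1/x + 1/2⌋ with hn
  have hfl : (n:ℝ) ≤ 1/x + 1/2 := Int.floor_le _
  have hfu : 1/x + 1/2 < (n:ℝ) + 1 := Int.lt_floor_add_one _
  rcases lt_or_gt_of_ne hx0 with hneg | hpos
  · right
    have h2 : 1/x ≤ -2 := by
      have h := one_div_le_one_div_neg (by norm_num : (-(1/2):ℝ) < 0) hneg hl
      rw [show (1:ℝ)/(-(1/2)) = -2 by norm_num] at h
      exact h
    have hinv : 1/x < 0 := by linarith
    have hn2 : n ≤ -2 := by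
      have h3 : (n:ℝ) < -1 := by linarith
      have : n < -1 := by exact_mod_cast h3
      omega
    refine ⟨(-n-2).toNat, ⟨?_, ?_⟩, hl⟩
    · have hk : (((-n-2).toNat : ℕ) : ℝ) = -(n:ℝ)-2 := by
        have h' : (((-n-2).toNat : ℕ) : ℤ) = -n - 2 := Int.toNat_of_nonneg (by omega)
        push_cast at h' ⊢
        exact_mod_cast h'
      rw [hk]
      have hnn : ((n:ℝ) + 1/2) < 0 := by
        have : (n:ℝ) ≤ -2 := by exact_mod_cast hn2
        linarith
      have step : 1/((n:ℝ)+1/2) < x := by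
        have := one_div_lt_one_div_neg hinv hnn (by linarith : 1/x < (n:ℝ)+1/2)
        rwa [one_div_one_div] at this
      have e : -(2/(2*(-(n:ℝ)-2)+3)) = 1/((n:ℝ)+1/2) := by
        have hcast : (n:ℝ) ≤ -2 := by exact_mod_cast hn2
        rw [show (2*(-(n:ℝ)-2)+3) = -(2*(n:ℝ)+1) by ring, div_neg, neg_neg]
        rw [div_eq_div_iff (by intro hc; nlinarith) (by intro hc; nlinarith)]
        ring
      rw [e]; exact step
    · have hk : (((-n-2).toNat : ℕ) : ℝ) = -(n:ℝ)-2 := by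
        have h' : (((-n-2).toNat : ℕ) : ℤ) = -n - 2 := Int.toNat_of_nonneg (by omega)
        push_cast at h' ⊢
        exact_mod_cast h'
      rw [hk]
      have hnn : ((n:ℝ) - 1/2) < 0 := by
        have : (n:ℝ) ≤ -2 := by exact_mod_cast hn2
        linarith
      have step : x ≤ 1/((n:ℝ)-1/2) := by
        have := one_div_le_one_div_neg hnn hinv (by linarith : (n:ℝ)-1/2 ≤ 1/x)
        rwa [one_div_one_div] at this
      have e : -(2/(2*(-(n:ℝ)-2)+5)) = 1/((n:ℝ)-1/2) := by
        have hcast : (n:ℝ) ≤ -2 := by exact_mod_cast hn2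
        rw [show (2*(-(n:ℝ)-2)+5) = -(2*(n:ℝ)-1) by ring, div_neg, neg_neg]
        rw [div_eq_div_iff (by intro hc; nlinarith) (by intro hc; nlinarith)]
        ring
      rw [e]; exact step
  · left
    have h2 : 2 ≤ 1/x := by
      rw [le_div_iff₀ hpos]; linarith
    have hinv : 0 < 1/x := by linarith
    have hn2 : 2 ≤ n := by
      have h3 : (1:ℝ) < (n:ℝ) := by linarith
      have : 1 < n := by exact_mod_cast h3
      omega
    refine ⟨(n-2).toNat, ⟨?_, ?_⟩, hr⟩
    · have hk : (((n-2).toNat : ℕ) : ℝ) = (n:ℝ)-2 := by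
        have h' : (((n-2).toNat : ℕ) : ℤ) = n - 2 := Int.toNat_of_nonneg (by omega)
        push_cast at h' ⊢
        exact_mod_cast h'
      rw [hk]
      have hnn : (0:ℝ) < (n:ℝ) + 1/2 := by
        have : (2:ℝ) ≤ (n:ℝ) := by exact_mod_cast hn2
        linarith
      have step : 1/((n:ℝ)+1/2) < x := by
        have := one_div_lt_one_div_of_lt hinv (by linarith : 1/x < (n:ℝ)+1/2)
        rwa [one_div_one_div] at this
      have e : 2/(2*((n:ℝ)-2)+5) = 1/((n:ℝ)+1/2) := by
        rw [div_eq_div_iff (by intro hc; nlinarith) (by intro hc; nlinarith)]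
        ring
      rw [e]; exact step
    · have hk : (((n-2).toNat : ℕ) : ℝ) = (n:ℝ)-2 := by
        have h' : (((n-2).toNat : ℕ) : ℤ) = n - 2 := Int.toNat_of_nonneg (by omega)
        push_cast at h' ⊢
        exact_mod_cast h'
      rw [hk]
      have hnn : (0:ℝ) < (n:ℝ) - 1/2 := by
        have : (2:ℝ) ≤ (n:ℝ) := by exact_mod_cast hn2
        linarith
      have step : x ≤ 1/((n:ℝ)-1/2) := by
        have := one_div_le_one_div_of_le hnn (by linarith : (n:ℝ)-1/2 ≤ 1/x)
        rwa [one_div_one_div] at this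
      have e : 2/(2*((n:ℝ)-2)+3) = 1/((n:ℝ)-1/2) := by
        rw [div_eq_div_iff (by intro hc; nlinarith) (by intro hc; nlinarith)]
        ring
      rw [e]; exact step

section Core

variable {E : Set ℝ}

lemma imgP (hE : E ⊆ Ioo (-(1/2):ℝ) (1/2)) (hE0 : (0:ℝ) ∉ E) (k : ℕ) :
    Bp k ∩ oddNICF ⁻¹' E = (fun y => 1/(y + ((k:ℝ)+2))) '' (if k = 0 then E ∩ Ioi 0 else E) := by
  ext x
  simp only [Set.mem_inter_iff, Set.mem_preimage, Set.mem_image]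
  constructor
  · rintro ⟨hxB, hxE⟩
    obtain ⟨hx0, hfl⟩ := floor_Bp hxB
    have hTx : oddNICF x = 1/x - ((k:ℝ)+2) := by
      rw [T_eq (ne_of_gt hx0), hfl]; push_cast; ring
    refine ⟨oddNICF x, ?_, ?_⟩
    · by_cases hk : k = 0
      · subst hk
        simp only [if_pos rfl, Set.mem_inter_iff, Set.mem_Ioi]
        refine ⟨hxE, ?_⟩
        have hx12 : x ≤ 1/2 := hxB.2
        have h2 : 2 ≤ 1/x := by rw [le_div_iff₀ hx0]; linarith
        have hge : 0 ≤ oddNICF x := by rw [hTx]; push_cast; linarith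
        have hne : oddNICF x ≠ 0 := fun hc => hE0 (hc ▸ hxE)
        exact lt_of_le_of_ne hge (Ne.symm hne)
      · rw [if_neg hk]; exact hxE
    · rw [hTx]
      rw [show 1/x - ((k:ℝ)+2) + ((k:ℝ)+2) = 1/x by ring, one_div_one_div]
  · rintro ⟨y, hy, rfl⟩
    have hyE : y ∈ E := by
      by_cases hk : k = 0
      · subst hk; rw [if_pos rfl] at hy; exact hy.1
      · rwa [if_neg hk] at hy
    obtain ⟨hy1, hy2⟩ := hE hyE
    have hk0 : (0:ℝ) ≤ (k:ℝ) := Nat.cast_nonneg k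
    have hu : (0:ℝ) < y + ((k:ℝ)+2) := by linarith
    have hxmem : 1/(y + ((k:ℝ)+2)) ∈ Bp k := by
      refine ⟨⟨?_, ?_⟩, ?_⟩
      · have hlt : y + ((k:ℝ)+2) < (2*(k:ℝ)+5)/2 := by linarith
        have h1 := one_div_lt_one_div_of_lt hu hlt
        rwa [one_div_div] at h1
      · have hge : (2*(k:ℝ)+3)/2 < y + ((k:ℝ)+2) := by linarith
        have h1 := le_of_lt (one_div_lt_one_div_of_lt (by positivity) hge)
        rwa [one_div_div] at h1
      · simp only [Set.mem_Iic]
        by_cases hk : k = 0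
        · subst hk
          rw [if_pos rfl] at hy
          have hy0 : 0 < y := hy.2
          have h3 : 1/(y + (((0:ℕ):ℝ)+2)) < 1/2 := by
            apply one_div_lt_one_div_of_lt (by norm_num)
            push_cast
            linarith
          push_cast at h3 ⊢
          linarith
        · have hk1 : (1:ℝ) ≤ (k:ℝ) := by exact_mod_cast Nat.one_le_iff_ne_zero.mpr hk
          have h3 : 1/(y + ((k:ℝ)+2)) < 1/2 :=
            one_div_lt_one_div_of_lt (by norm_num) (by linarith)
          linarith
    refine ⟨hxmem, ?_⟩
    obtain ⟨hx0, hfl⟩ := floor_Bp hxmem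
    rw [one_div_one_div] at hfl
    rw [T_eq (ne_of_gt hx0), one_div_one_div, hfl]
    rw [show ((((k:ℤ)+2) : ℤ):ℝ) = (k:ℝ)+2 by push_cast; ring]
    rw [show y + ((k:ℝ)+2) - ((k:ℝ)+2) = y by ring]
    exact hyE

lemma imgN (hE : E ⊆ Ioo (-(1/2):ℝ) (1/2)) (hE0 : (0:ℝ) ∉ E) (k : ℕ) :
    Bn k ∩ oddNICF ⁻¹' E = (fun y => 1/(y - ((k:ℝ)+2))) '' (if k = 0 then E ∩ Iio 0 else E) := by
  ext x
  simp only [Set.mem_inter_iff, Set.mem_preimage, Set.mem_image]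
  constructor
  · rintro ⟨hxB, hxE⟩
    obtain ⟨hx0, hfl⟩ := floor_Bn hxB
    have hTx : oddNICF x = 1/x + ((k:ℝ)+2) := by
      rw [T_eq (ne_of_lt hx0), hfl]; push_cast; ring
    refine ⟨oddNICF x, ?_, ?_⟩
    · by_cases hk : k = 0
      · subst hk
        simp only [if_pos rfl, Set.mem_inter_iff, Set.mem_Iio]
        refine ⟨hxE, ?_⟩
        have hx12 : -(1/2) ≤ x := hxB.2
        have h2 : 1/x ≤ -2 := by
          have h := one_div_le_one_div_neg (by norm_num : (-(1/2):ℝ) < 0) hx0 hx12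
          rw [show (1:ℝ)/(-(1/2)) = -2 by norm_num] at h
          exact h
        have hge : oddNICF x ≤ 0 := by rw [hTx]; push_cast; linarith
        have hne : oddNICF x ≠ 0 := fun hc => hE0 (hc ▸ hxE)
        exact lt_of_le_of_ne hge hne
      · rw [if_neg hk]; exact hxE
    · rw [hTx]
      rw [show 1/x + ((k:ℝ)+2) - ((k:ℝ)+2) = 1/x by ring, one_div_one_div]
  · rintro ⟨y, hy, rfl⟩
    have hyE : y ∈ E := by
      by_cases hk : k = 0
      · subst hk; rw [if_pos rfl] at hy; exact hy.1
      · rwa [if_neg hk] at hy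
    obtain ⟨hy1, hy2⟩ := hE hyE
    have hk0 : (0:ℝ) ≤ (k:ℝ) := Nat.cast_nonneg k
    have hu : y - ((k:ℝ)+2) < 0 := by linarith
    have hxmem : 1/(y - ((k:ℝ)+2)) ∈ Bn k := by
      refine ⟨⟨?_, ?_⟩, ?_⟩
      · have hlt : y - ((k:ℝ)+2) < -((2*(k:ℝ)+3)/2) := by linarith
        have hb : -((2*(k:ℝ)+3)/2) < (0:ℝ) := by
          have : (0:ℝ) < (2*(k:ℝ)+3)/2 := by positivity
          linarith
        have h1 := one_div_lt_one_div_neg hu hb hlt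
        rw [show (1:ℝ)/(-((2*(k:ℝ)+3)/2)) = -(2/(2*(k:ℝ)+3)) by
          rw [div_neg, one_div_div]] at h1
        exact h1
      · have hgt : -((2*(k:ℝ)+5)/2) < y - ((k:ℝ)+2) := by linarith
        have hb : -((2*(k:ℝ)+5)/2) < (0:ℝ) := by
          have : (0:ℝ) < (2*(k:ℝ)+5)/2 := by positivity
          linarith
        have h2 := one_div_lt_one_div_neg hb hu hgt
        rw [show (1:ℝ)/(-((2*(k:ℝ)+5)/2)) = -(2/(2*(k:ℝ)+5)) by
          rw [div_neg, one_div_div]] at h2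
        exact le_of_lt h2
      · simp only [Set.mem_Ici]
        have hu2 : y - ((k:ℝ)+2) < -2 := by
          by_cases hk : k = 0
          · subst hk
            rw [if_pos rfl] at hy
            have hy0 : y < 0 := hy.2
            push_cast
            linarith
          · have hk1 : (1:ℝ) ≤ (k:ℝ) := by exact_mod_cast Nat.one_le_iff_ne_zero.mpr hk
            linarith
        have h1 := one_div_lt_one_div_neg hu (by norm_num : (-2:ℝ) < 0) hu2
        rw [show (1:ℝ)/(-2:ℝ) = -(1/2) by norm_num] at h1
        linarith
    refine ⟨hxmem, ?_⟩
    obtain ⟨hx0, hfl⟩ := floor_Bn hxmem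
    rw [one_div_one_div] at hfl
    rw [T_eq (ne_of_lt hx0), one_div_one_div, hfl]
    rw [show ((-((k:ℤ)+2) : ℤ):ℝ) = -((k:ℝ)+2) by push_cast; ring]
    rw [show y - ((k:ℝ)+2) - -((k:ℝ)+2) = y by ring]
    exact hyE

noncomputable def A (k : ℕ) (y : ℝ) : ℝ :=
  (1/((k:ℝ) + (y + G)) - 1/((k:ℝ) + (y + G) + 1)) / L

lemma stepP (hE : E ⊆ Ioo (-(1/2):ℝ) (1/2)) (hE0 : (0:ℝ) ∉ E) (hEm : MeasurableSet E) (k : ℕ) :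
    ∫⁻ x in Bp k ∩ oddNICF ⁻¹' E, d x
      = ∫⁻ y in (if k = 0 then E ∩ Ioi 0 else E), ENNReal.ofReal (A k y) := by
  set s : Set ℝ := if k = 0 then E ∩ Ioi 0 else E with hs
  have hsm : MeasurableSet s := by
    rw [hs]; split
    · exact hEm.inter measurableSet_Ioi
    · exact hEm
  have hsub : s ⊆ Ioo (-(1/2):ℝ) (1/2) := by
    rw [hs]; split
    · exact fun y hy => hE hy.1
    · exact hE
  have hu : ∀ y ∈ s, (3:ℝ)/2 ≤ y + ((k:ℝ)+2) := by
    intro y hy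
    have h1 := (hsub hy).1
    have hk0 : (0:ℝ) ≤ (k:ℝ) := Nat.cast_nonneg k
    linarith
  have hderiv : ∀ y ∈ s, HasDerivWithinAt (fun y => 1/(y + ((k:ℝ)+2)))
      (-(1/(y+((k:ℝ)+2))^2)) s y := by
    intro y hy
    have hu0 : y + ((k:ℝ)+2) ≠ 0 := by have := hu y hy; intro hc; rw [hc] at this; norm_num at this
    have h0 : HasDerivAt (fun y : ℝ => (y + ((k:ℝ)+2))⁻¹)
        (-1 / (y+((k:ℝ)+2))^2) y := ((hasDerivAt_id y).add_const _).inv hu0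
    have h1 : HasDerivAt (fun y => 1/(y + ((k:ℝ)+2))) (-(1/(y+((k:ℝ)+2))^2)) y := by
      simpa [one_div, neg_div] using h0
    exact h1.hasDerivWithinAt
  have hinj : Set.InjOn (fun y => 1/(y + ((k:ℝ)+2))) s := by
    intro a _ b _ hab
    simp only [one_div] at hab
    have := inv_injective hab
    linarith [this]
  rw [imgP hE hE0 k, ← hs, lintegral_image_1d hsm hderiv hinj]
  apply setLIntegral_congr_fun hsm
  intro y hy
  have hu32 := hu y hy
  have hu0 : (0:ℝ) < y + ((k:ℝ)+2) := by linarith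
  have habs : |(-(1/(y+((k:ℝ)+2))^2))| = 1/(y+((k:ℝ)+2))^2 := by
    rw [abs_neg, abs_of_pos (by positivity)]
  beta_reduce
  rw [habs]
  show ENNReal.ofReal (1/(y+((k:ℝ)+2))^2) * ENNReal.ofReal (h (1/(y+((k:ℝ)+2))))
      = ENNReal.ofReal (A k y)
  rw [← ENNReal.ofReal_mul (by positivity)]
  congr 1
  have e1 : 1/(y+((k:ℝ)+2))^2 * h (1/(y+((k:ℝ)+2))) = h (1/(y+((k:ℝ)+2))) / (y+((k:ℝ)+2))^2 := by
    ring
  rw [e1, density_branch (by rw [abs_of_pos hu0]; exact hu32), abs_of_pos hu0]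
  unfold A
  rw [show y+((k:ℝ)+2)+G-2 = (k:ℝ) + (y+G) by ring,
      show y+((k:ℝ)+2)+G-1 = (k:ℝ) + (y+G)+1 by ring]

lemma stepN (hE : E ⊆ Ioo (-(1/2):ℝ) (1/2)) (hE0 : (0:ℝ) ∉ E) (hEm : MeasurableSet E) (k : ℕ) :
    ∫⁻ x in Bn k ∩ oddNICF ⁻¹' E, d x
      = ∫⁻ y in (if k = 0 then E ∩ Iio 0 else E), ENNReal.ofReal (A k (-y)) := by
  set s : Set ℝ := if k = 0 then E ∩ Iio 0 else E with hs
  have hsm : MeasurableSet s := by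
    rw [hs]; split
    · exact hEm.inter measurableSet_Iio
    · exact hEm
  have hsub : s ⊆ Ioo (-(1/2):ℝ) (1/2) := by
    rw [hs]; split
    · exact fun y hy => hE hy.1
    · exact hE
  have hu : ∀ y ∈ s, y - ((k:ℝ)+2) ≤ -(3/2) := by
    intro y hy
    have h1 := (hsub hy).2
    have hk0 : (0:ℝ) ≤ (k:ℝ) := Nat.cast_nonneg k
    linarith
  have hderiv : ∀ y ∈ s, HasDerivWithinAt (fun y => 1/(y - ((k:ℝ)+2)))
      (-(1/(y-((k:ℝ)+2))^2)) s y := by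
    intro y hy
    have hu0 : y - ((k:ℝ)+2) ≠ 0 := by have := hu y hy; intro hc; rw [hc] at this; norm_num at this
    have h0 : HasDerivAt (fun y : ℝ => (y - ((k:ℝ)+2))⁻¹)
        (-1 / (y-((k:ℝ)+2))^2) y := ((hasDerivAt_id y).sub_const _).inv hu0
    have h1 : HasDerivAt (fun y => 1/(y - ((k:ℝ)+2))) (-(1/(y-((k:ℝ)+2))^2)) y := by
      simpa [one_div, neg_div] using h0
    exact h1.hasDerivWithinAt
  have hinj : Set.InjOn (fun y => 1/(y - ((k:ℝ)+2))) s := by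
    intro a _ b _ hab
    simp only [one_div] at hab
    have := inv_injective hab
    linarith [this]
  rw [imgN hE hE0 k, ← hs, lintegral_image_1d hsm hderiv hinj]
  apply setLIntegral_congr_fun hsm
  intro y hy
  have hu32 := hu y hy
  have hu0 : y - ((k:ℝ)+2) < 0 := by linarith
  have hsq : (0:ℝ) < (y-((k:ℝ)+2))^2 := by nlinarith [hu0]
  have habs : |(-(1/(y-((k:ℝ)+2))^2))| = 1/(y-((k:ℝ)+2))^2 := by
    rw [abs_neg, abs_of_pos (one_div_pos.mpr hsq)]
  beta_reduce
  rw [habs]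
  show ENNReal.ofReal (1/(y-((k:ℝ)+2))^2) * ENNReal.ofReal (h (1/(y-((k:ℝ)+2))))
      = ENNReal.ofReal (A k (-y))
  rw [← ENNReal.ofReal_mul (le_of_lt (one_div_pos.mpr hsq))]
  congr 1
  have e1 : 1/(y-((k:ℝ)+2))^2 * h (1/(y-((k:ℝ)+2))) = h (1/(y-((k:ℝ)+2))) / (y-((k:ℝ)+2))^2 := by
    ring
  have habs2 : |y - ((k:ℝ)+2)| = ((k:ℝ)+2) - y := by
    rw [abs_of_neg hu0]; ring
  rw [e1, density_branch (by rw [habs2]; linarith), habs2]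
  unfold A
  rw [show ((k:ℝ)+2)-y+G-2 = (k:ℝ) + (-y+G) by ring,
      show ((k:ℝ)+2)-y+G-1 = (k:ℝ) + (-y+G)+1 by ring]

end Core

section Pointwise

lemma A_hasSum {y : ℝ} (hy : -(1/2) < y) : HasSum (fun k => A k y) ((1/(y+G))/L) := by
  have hb : 0 < y + G := by linarith [G_gt]
  exact (tele hb).div_const L

lemma A_shift_hasSum {z : ℝ} (hz : -(3/2) < z) :
    HasSum (fun k => A (k+1) z) ((1/(1+(z+G)))/L) := by
  have hb : 0 < 1 + (z + G) := by linarith [G_gt]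
  have h0 := (tele hb).div_const L
  have h2 : (fun k : ℕ => (1/((k:ℝ)+(1+(z+G))) - 1/((k:ℝ)+(1+(z+G))+1))/L)
      = fun k : ℕ => A (k+1) z := by
    funext k
    unfold A
    push_cast
    ring_nf
  rwa [h2] at h0

lemma A_nonneg {y : ℝ} (k : ℕ) (hy : -(1/2) < y) : 0 ≤ A k y := by
  have hb : 0 < y + G := by linarith [G_gt]
  have h1 : (0:ℝ) < (k:ℝ) + (y + G) := by positivity
  have h2 : (0:ℝ) < (k:ℝ) + (y + G) + 1 := by positivity
  unfold A
  apply div_nonneg _ (le_of_lt L_pos)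
  rw [sub_nonneg, div_le_div_iff₀ h2 h1]
  nlinarith

lemma tsum_ofReal_A {y : ℝ} (hy : -(1/2) < y) :
    ∑' k, ENNReal.ofReal (A k y) = ENNReal.ofReal ((1/(y+G))/L) := by
  rw [← ENNReal.ofReal_tsum_of_nonneg (fun k => A_nonneg k hy) (A_hasSum hy).summable]
  rw [(A_hasSum hy).tsum_eq]

lemma tsum_ofReal_A_shift {z : ℝ} (hz : -(3/2) < z) :
    ∑' k, ENNReal.ofReal (A (k+1) z) = ENNReal.ofReal ((1/(1+(z+G)))/L) := by
  have hnn : ∀ k : ℕ, 0 ≤ A (k+1) z := by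
    intro k
    have hb : 0 < z + G := by linarith [G_gt]
    have h1 : (0:ℝ) < ((k+1:ℕ):ℝ) + (z + G) := by positivity
    have h2 : (0:ℝ) < ((k+1:ℕ):ℝ) + (z + G) + 1 := by positivity
    unfold A
    apply div_nonneg _ (le_of_lt L_pos)
    rw [sub_nonneg, div_le_div_iff₀ h2 h1]
    nlinarith
  rw [← ENNReal.ofReal_tsum_of_nonneg hnn (A_shift_hasSum hz).summable]
  rw [(A_shift_hasSum hz).tsum_eq]

lemma pointwise_pos {y : ℝ} (hy0 : 0 < y) (hy2 : y < 1/2) :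
    ENNReal.ofReal (A 0 y)
      + (∑' k, ENNReal.ofReal (A (k+1) y) + ∑' k, ENNReal.ofReal (A (k+1) (-y))) = d y := by
  have h1 : ENNReal.ofReal (A 0 y) + ∑' k, ENNReal.ofReal (A (k+1) y)
      = ∑' k, ENNReal.ofReal (A k y) :=
      (tsum_eq_zero_add' (f := fun k => ENNReal.ofReal (A k y)) ENNReal.summable).symm
  rw [← add_assoc, h1, tsum_ofReal_A (by linarith), tsum_ofReal_A_shift (by linarith : -(3/2) < -y)]
  have hb1 : (0:ℝ) ≤ (1/(y+G))/L :=
    div_nonneg (div_nonneg one_pos.le (by linarith [G_gt])) L_pos.le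
  have hb2 : (0:ℝ) ≤ (1/(1+(-y+G)))/L :=
    div_nonneg (div_nonneg one_pos.le (by linarith [G_gt])) L_pos.le
  rw [← ENNReal.ofReal_add hb1 hb2]
  unfold d h
  congr 1
  rw [abs_of_pos hy0]
  have hG := G_gt
  have hd1 : y + G ≠ 0 := by intro hc; nlinarith
  have hd2 : 1 + (-y + G) ≠ 0 := by intro hc; nlinarith
  have hd3 : G + y ≠ 0 := by intro hc; nlinarith
  have hd4 : G + 1 - y ≠ 0 := by intro hc; nlinarith
  have hL : L ≠ 0 := ne_of_gt L_pos
  field_simp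
  ring

lemma pointwise_neg {y : ℝ} (hy0 : y < 0) (hy2 : -(1/2) < y) :
    ENNReal.ofReal (A 0 (-y))
      + (∑' k, ENNReal.ofReal (A (k+1) y) + ∑' k, ENNReal.ofReal (A (k+1) (-y))) = d y := by
  have h1 : ENNReal.ofReal (A 0 (-y)) + ∑' k, ENNReal.ofReal (A (k+1) (-y))
      = ∑' k, ENNReal.ofReal (A k (-y)) :=
      (tsum_eq_zero_add' (f := fun k => ENNReal.ofReal (A k (-y))) ENNReal.summable).symm
  rw [show ENNReal.ofReal (A 0 (-y))
      + (∑' k, ENNReal.ofReal (A (k+1) y) + ∑' k, ENNReal.ofReal (A (k+1) (-y)))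
      = (ENNReal.ofReal (A 0 (-y)) + ∑' k, ENNReal.ofReal (A (k+1) (-y)))
        + ∑' k, ENNReal.ofReal (A (k+1) y) by ring]
  rw [h1, tsum_ofReal_A (by linarith : -(1/2) < -y), tsum_ofReal_A_shift (by linarith : -(3/2) < y)]
  have hb1 : (0:ℝ) ≤ (1/(-y+G))/L :=
    div_nonneg (div_nonneg one_pos.le (by linarith [G_gt])) L_pos.le
  have hb2 : (0:ℝ) ≤ (1/(1+(y+G)))/L :=
    div_nonneg (div_nonneg one_pos.le (by linarith [G_gt])) L_pos.le
  rw [← ENNReal.ofReal_add hb1 hb2]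
  unfold d h
  congr 1
  rw [abs_of_neg hy0]
  have hG := G_gt
  have hd1 : -y + G ≠ 0 := by intro hc; nlinarith
  have hd2 : 1 + (y + G) ≠ 0 := by intro hc; nlinarith
  have hd3 : G + -y ≠ 0 := by intro hc; nlinarith
  have hd4 : G + 1 - -y ≠ 0 := by intro hc; nlinarith
  have hd2' : 1 + y + G ≠ 0 := by intro hc; nlinarith
  have hd4' : G + 1 + y ≠ 0 := by intro hc; nlinarith
  have hL : L ≠ 0 := ne_of_gt L_pos
  field_simp
  ring

end Pointwise



section Assembly

lemma A_measE (k : ℕ) : Measurable fun y : ℝ => ENNReal.ofReal (A k y) := by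
  unfold A
  fun_prop

lemma A_measE' (k : ℕ) : Measurable fun y : ℝ => ENNReal.ofReal (A k (-y)) := by
  unfold A
  fun_prop

lemma core {E : Set ℝ} (hE : E ⊆ Ioo (-(1/2):ℝ) (1/2)) (hE0 : (0:ℝ) ∉ E)
    (hEm : MeasurableSet E) :
    oddNICFMeasure (oddNICF ⁻¹' E) = oddNICFMeasure E := by
  have hPre : MeasurableSet (oddNICF ⁻¹' E) := T_meas hEm
  have hIc : E ⊆ Ic := fun x hx => ⟨le_of_lt (hE hx).1, le_of_lt (hE hx).2⟩
  have hEp_m : MeasurableSet (E ∩ Ioi 0) := hEm.inter measurableSet_Ioi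
  have hEn_m : MeasurableSet (E ∩ Iio 0) := hEm.inter measurableSet_Iio
  have hdecomp : oddNICF ⁻¹' E ∩ Ic
      = (⋃ k, Bp k ∩ oddNICF ⁻¹' E) ∪ (⋃ k, Bn k ∩ oddNICF ⁻¹' E) := by
    ext x
    simp only [Set.mem_inter_iff, Set.mem_union, Set.mem_iUnion, Set.mem_preimage]
    constructor
    · rintro ⟨hxE, hxI⟩
      have hx0 : x ≠ 0 := by
        intro hc; subst hc; rw [T_zero] at hxE; exact hE0 hxE
      rcases cover hxI hx0 with ⟨k, hk⟩ | ⟨k, hk⟩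
      · exact Or.inl ⟨k, hk, hxE⟩
      · exact Or.inr ⟨k, hk, hxE⟩
    · rintro (⟨k, hk, hxE⟩ | ⟨k, hk, hxE⟩)
      · refine ⟨hxE, ?_, hk.2⟩
        have := (floor_Bp hk).1; linarith
      · refine ⟨hxE, hk.2, ?_⟩
        have := (floor_Bn hk).1; linarith
  have hBpm : ∀ k, MeasurableSet (Bp k ∩ oddNICF ⁻¹' E) :=
    fun k => (measurableSet_Ioc.inter measurableSet_Iic).inter hPre
  have hBnm : ∀ k, MeasurableSet (Bn k ∩ oddNICF ⁻¹' E) :=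
    fun k => (measurableSet_Ioc.inter measurableSet_Ici).inter hPre
  have hdisjP : Pairwise (Function.onFun Disjoint fun k => Bp k ∩ oddNICF ⁻¹' E) := by
    intro i j hij
    rw [Function.onFun, Set.disjoint_left]
    rintro x ⟨hxi, _⟩ ⟨hxj, _⟩
    have h1 := (floor_Bp hxi).2
    have h2 := (floor_Bp hxj).2
    rw [h1] at h2
    have : i = j := by omega
    exact hij this
  have hdisjN : Pairwise (Function.onFun Disjoint fun k => Bn k ∩ oddNICF ⁻¹' E) := by
    intro i j hij
    rw [Function.onFun, Set.disjoint_left]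
    rintro x ⟨hxi, _⟩ ⟨hxj, _⟩
    have h1 := (floor_Bn hxi).2
    have h2 := (floor_Bn hxj).2
    rw [h1] at h2
    have : i = j := by omega
    exact hij this
  have hdisjPN : Disjoint (⋃ k, Bp k ∩ oddNICF ⁻¹' E) (⋃ k, Bn k ∩ oddNICF ⁻¹' E) := by
    rw [Set.disjoint_left]
    intro x hx1 hx2
    simp only [Set.mem_iUnion] at hx1 hx2
    obtain ⟨i, hi, _⟩ := hx1
    obtain ⟨j, hj, _⟩ := hx2
    have hp := (floor_Bp hi).1
    have hn := (floor_Bn hj).1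
    linarith
  have hEsplit : E = (E ∩ Ioi 0) ∪ (E ∩ Iio 0) := by
    ext x
    simp only [Set.mem_inter_iff, Set.mem_union, Set.mem_Ioi, Set.mem_Iio]
    constructor
    · intro hx
      rcases lt_trichotomy x 0 with hc|hc|hc
      · exact Or.inr ⟨hx, hc⟩
      · exact absurd (hc ▸ hx) hE0
      · exact Or.inl ⟨hx, hc⟩
    · rintro (hc|hc) <;> exact hc.1
  have hdisjE : Disjoint (E ∩ Ioi 0) (E ∩ Iio 0) := by
    rw [Set.disjoint_left]
    rintro x ⟨_, h1⟩ ⟨_, h2⟩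
    simp only [Set.mem_Ioi] at h1
    simp only [Set.mem_Iio] at h2
    linarith
  have hLsplit : ∀ f : ℝ → ENNReal,
      ∫⁻ y in E, f y = (∫⁻ y in E ∩ Ioi 0, f y) + ∫⁻ y in E ∩ Iio 0, f y := by
    intro f
    conv_lhs => rw [hEsplit]
    exact lintegral_union hEn_m hdisjE
  have hSp_m : Measurable (fun y : ℝ => ∑' k, ENNReal.ofReal (A (k+1) y)) :=
    Measurable.ennreal_tsum fun k => A_measE (k+1)
  have hSn_m : Measurable (fun y : ℝ => ∑' k, ENNReal.ofReal (A (k+1) (-y))) :=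
    Measurable.ennreal_tsum fun k => A_measE' (k+1)
  have main : oddNICFMeasure (oddNICF ⁻¹' E)
      = (∫⁻ y in E ∩ Ioi 0, ENNReal.ofReal (A 0 y))
        + (∫⁻ y in E ∩ Iio 0, ENNReal.ofReal (A 0 (-y)))
        + ((∫⁻ y in E, ∑' k, ENNReal.ofReal (A (k+1) y))
            + ∫⁻ y in E, ∑' k, ENNReal.ofReal (A (k+1) (-y))) := by
    rw [mu_apply hPre, hdecomp,
        lintegral_union (MeasurableSet.iUnion hBnm) hdisjPN,
        lintegral_iUnion hBpm hdisjP, lintegral_iUnion hBnm hdisjN]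
    rw [tsum_congr fun k => stepP hE hE0 hEm k, tsum_congr fun k => stepN hE hE0 hEm k]
    rw [tsum_eq_zero_add' (f := fun k => ∫⁻ y in (if k = 0 then E ∩ Ioi 0 else E),
        ENNReal.ofReal (A k y)) ENNReal.summable]
    rw [tsum_eq_zero_add' (f := fun k => ∫⁻ y in (if k = 0 then E ∩ Iio 0 else E),
        ENNReal.ofReal (A k (-y))) ENNReal.summable]
    simp only [eq_self_iff_true, if_true, Nat.succ_ne_zero, if_false]
    rw [← lintegral_tsum fun k => (A_measE (k+1)).aemeasurable]
    rw [← lintegral_tsum fun k => (A_measE' (k+1)).aemeasurable]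
    ring
  have expand1 : ∫⁻ y in E, ((∑' k, ENNReal.ofReal (A (k+1) y))
        + ∑' k, ENNReal.ofReal (A (k+1) (-y)))
      = (∫⁻ y in E, ∑' k, ENNReal.ofReal (A (k+1) y))
        + ∫⁻ y in E, ∑' k, ENNReal.ofReal (A (k+1) (-y)) :=
    lintegral_add_left hSp_m _
  have expand2 : ∫⁻ y in E ∩ Ioi 0, (ENNReal.ofReal (A 0 y)
        + ((∑' k, ENNReal.ofReal (A (k+1) y)) + ∑' k, ENNReal.ofReal (A (k+1) (-y))))
      = (∫⁻ y in E ∩ Ioi 0, ENNReal.ofReal (A 0 y))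
        + ∫⁻ y in E ∩ Ioi 0, ((∑' k, ENNReal.ofReal (A (k+1) y))
            + ∑' k, ENNReal.ofReal (A (k+1) (-y))) :=
    lintegral_add_left (A_measE 0) _
  have expand3 : ∫⁻ y in E ∩ Iio 0, (ENNReal.ofReal (A 0 (-y))
        + ((∑' k, ENNReal.ofReal (A (k+1) y)) + ∑' k, ENNReal.ofReal (A (k+1) (-y))))
      = (∫⁻ y in E ∩ Iio 0, ENNReal.ofReal (A 0 (-y)))
        + ∫⁻ y in E ∩ Iio 0, ((∑' k, ENNReal.ofReal (A (k+1) y))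
            + ∑' k, ENNReal.ofReal (A (k+1) (-y))) :=
    lintegral_add_left (A_measE' 0) _
  have hposEq : ∫⁻ y in E ∩ Ioi 0, (ENNReal.ofReal (A 0 y)
        + ((∑' k, ENNReal.ofReal (A (k+1) y)) + ∑' k, ENNReal.ofReal (A (k+1) (-y))))
      = ∫⁻ y in E ∩ Ioi 0, d y := by
    apply setLIntegral_congr_fun hEp_m
    rintro y ⟨hyE, hy0⟩
    exact pointwise_pos hy0 (hE hyE).2
  have hnegEq : ∫⁻ y in E ∩ Iio 0, (ENNReal.ofReal (A 0 (-y))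
        + ((∑' k, ENNReal.ofReal (A (k+1) y)) + ∑' k, ENNReal.ofReal (A (k+1) (-y))))
      = ∫⁻ y in E ∩ Iio 0, d y := by
    apply setLIntegral_congr_fun hEn_m
    rintro y ⟨hyE, hy0⟩
    exact pointwise_neg hy0 (hE hyE).1
  rw [main, ← expand1, hLsplit (fun y => (∑' k, ENNReal.ofReal (A (k+1) y))
      + ∑' k, ENNReal.ofReal (A (k+1) (-y)))]
  rw [show (∫⁻ y in E ∩ Ioi 0, ENNReal.ofReal (A 0 y))
        + (∫⁻ y in E ∩ Iio 0, ENNReal.ofReal (A 0 (-y)))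
        + ((∫⁻ y in E ∩ Ioi 0, ((∑' k, ENNReal.ofReal (A (k+1) y))
              + ∑' k, ENNReal.ofReal (A (k+1) (-y))))
            + ∫⁻ y in E ∩ Iio 0, ((∑' k, ENNReal.ofReal (A (k+1) y))
              + ∑' k, ENNReal.ofReal (A (k+1) (-y))))
      = ((∫⁻ y in E ∩ Ioi 0, ENNReal.ofReal (A 0 y))
          + ∫⁻ y in E ∩ Ioi 0, ((∑' k, ENNReal.ofReal (A (k+1) y))
              + ∑' k, ENNReal.ofReal (A (k+1) (-y))))
        + ((∫⁻ y in E ∩ Iio 0, ENNReal.ofReal (A 0 (-y)))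
          + ∫⁻ y in E ∩ Iio 0, ((∑' k, ENNReal.ofReal (A (k+1) y))
              + ∑' k, ENNReal.ofReal (A (k+1) (-y)))) by ring]
  rw [← expand2, ← expand3, hposEq, hnegEq, ← hLsplit d, mu_apply hEm,
      Set.inter_eq_self_of_subset_left hIc]

lemma mu_ac {S : Set ℝ} (hS : volume S = 0) : oddNICFMeasure S = 0 := by
  have h1 : oddNICFMeasure ≪ (volume : Measure ℝ) :=
    (withDensity_absolutelyContinuous _ _).trans
      (Measure.absolutelyContinuous_of_le Measure.restrict_le_self)
  exact h1 hS

lemma bad_countable : (oddNICF ⁻¹' ({-(1/2), 0, 1/2} : Set ℝ)).Countable := by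
  have hsub : oddNICF ⁻¹' ({-(1/2), 0, 1/2} : Set ℝ)
      ⊆ {0} ∪ Set.range (fun m : ℤ => 2/(m:ℝ)) := by
    intro x hx
    simp only [Set.mem_preimage, Set.mem_insert_iff, Set.mem_singleton_iff] at hx
    by_cases hx0 : x = 0
    · exact Or.inl hx0
    · right
      rw [T_eq hx0] at hx
      set n : ℤ := ⌊1/x + 1/2⌋ with hn
      have hxinv : 1/x ≠ 0 := one_div_ne_zero hx0
      have key : ∀ c : ℝ, 1/x = c → c ≠ 0 → x = 1/c := by
        intro c hc _
        rw [← hc, one_div_one_div]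
      rcases hx with hc | hc | hc
      · have h1 : 1/x = (n:ℝ) - 1/2 := by linarith
        refine ⟨2*n - 1, ?_⟩
        have hcne : (n:ℝ) - 1/2 ≠ 0 := by rw [← h1]; exact hxinv
        rw [key _ h1 hcne]
        push_cast
        rw [div_eq_div_iff (by intro hcc; apply hcne; linarith) hcne]
        ring
      · have h1 : 1/x = (n:ℝ) := by linarith
        refine ⟨2*n, ?_⟩
        have hcne : (n:ℝ) ≠ 0 := by rw [← h1]; exact hxinv
        rw [key _ h1 hcne]
        push_cast
        rw [div_eq_div_iff (by intro hcc; apply hcne; linarith) hcne]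
        ring
      · have h1 : 1/x = (n:ℝ) + 1/2 := by linarith
        refine ⟨2*n + 1, ?_⟩
        have hcne : (n:ℝ) + 1/2 ≠ 0 := by rw [← h1]; exact hxinv
        rw [key _ h1 hcne]
        push_cast
        rw [div_eq_div_iff (by intro hcc; apply hcne; linarith) hcne]
        ring
  exact Set.Countable.mono hsub ((Set.countable_singleton 0).union (Set.countable_range _))

lemma part2 {E : Set ℝ} (hE : E ⊆ Set.Icc (-(1/2):ℝ) (1/2)) (hEm : MeasurableSet E) :
    oddNICFMeasure (oddNICF ⁻¹' E) = oddNICFMeasure E := by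
  set bad : Set ℝ := {-(1/2), 0, 1/2} with hbad
  have hbadc : bad.Countable :=
    (Set.countable_singleton _).insert _ |>.insert _
  have hbadm : MeasurableSet bad := hbadc.measurableSet
  set E' : Set ℝ := E \ bad with hE'
  have hE'm : MeasurableSet E' := hEm.diff hbadm
  have hE'sub : E' ⊆ Ioo (-(1/2):ℝ) (1/2) := by
    rintro x ⟨hxE, hxb⟩
    obtain ⟨h1, h2⟩ := hE hxE
    simp only [hbad, Set.mem_insert_iff, Set.mem_singleton_iff, not_or] at hxb
    exact ⟨lt_of_le_of_ne h1 (Ne.symm hxb.1), lt_of_le_of_ne h2 hxb.2.2⟩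
  have hE'0 : (0:ℝ) ∉ E' := by
    rintro ⟨_, hxb⟩
    exact hxb (by simp [hbad])
  have hEeq : E = E' ∪ (E ∩ bad) := by
    ext x
    constructor
    · intro hx
      by_cases hb : x ∈ bad
      · exact Or.inr ⟨hx, hb⟩
      · exact Or.inl ⟨hx, hb⟩
    · rintro (hx | hx)
      · exact hx.1
      · exact hx.1
  have hbadnull : oddNICFMeasure (E ∩ bad) = 0 :=
    measure_mono_null Set.inter_subset_right (mu_ac (hbadc.measure_zero _))
  have hprenull : oddNICFMeasure (oddNICF ⁻¹' (E ∩ bad)) = 0 := by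
    apply measure_mono_null (Set.preimage_mono Set.inter_subset_right)
    exact measure_mono_null (subset_refl _) (mu_ac (bad_countable.measure_zero _))
  have union_null : ∀ (A B : Set ℝ), oddNICFMeasure B = 0 →
      oddNICFMeasure (A ∪ B) = oddNICFMeasure A := by
    intro A B hB
    apply le_antisymm
    · calc oddNICFMeasure (A ∪ B) ≤ oddNICFMeasure A + oddNICFMeasure B := measure_union_le _ _
        _ = oddNICFMeasure A := by rw [hB, add_zero]
    · exact measure_mono Set.subset_union_left
  calc oddNICFMeasure (oddNICF ⁻¹' E)
      = oddNICFMeasure (oddNICF ⁻¹' E' ∪ oddNICF ⁻¹' (E ∩ bad)) := by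
        rw [← Set.preimage_union, ← hEeq]
    _ = oddNICFMeasure (oddNICF ⁻¹' E') := union_null _ _ hprenull
    _ = oddNICFMeasure E' := core hE'sub hE'0 hE'm
    _ = oddNICFMeasure E := by
        conv_rhs => rw [hEeq]
        rw [union_null _ _ hbadnull]

end Assembly

end OddNICFAux

theorem oddNICFMeasure_invariant :
    IsProbabilityMeasure oddNICFMeasure ∧
    ∀ E ⊆ Set.Icc (-(1 / 2) : ℝ) (1 / 2), MeasurableSet E →
      oddNICFMeasure (oddNICF ⁻¹' E) = oddNICFMeasure E := by
  constructor
  · exact OddNICFAux.part1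
  · intro E hE hEm
    exact OddNICFAux.part2 hE hEm
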